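/- If W is a real mn×mn matrix, then the minimizer C₀ = F_{m,n} diag(c₀) F_{m,n}* of ‖W − C‖_F over the family of unitary BCCB matrices, where c₀ is the unit-modulus normalization of diag(F_{m,n}* W F_{m,n}), is a real matrix. -/

import Mathlib

open Matrix Kronecker

/-- The unitary discrete Fourier transform matrix of size `n`. -/
noncomputable def dft (n : ℕ) : Matrix (Fin n) (Fin n) ℂ := fun j k =>
  Complex.exp (-2 * Real.pi * Complex.I * (j.1 : ℂ) * (k.1 : ℂ) / (n : ℂ)) / Real.sqrt n

/-- The two-dimensional unitary DFT matrix `F_{m,n} = F_m ⊗ F_n`. -/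
noncomputable def dft2 (m n : ℕ) : Matrix (Fin m × Fin n) (Fin m × Fin n) ℂ :=
  dft m ⊗ₖ dft n

lemma exp_congr (n : ℕ) [NeZero n] {a b : ℤ} (h : a ≡ b [ZMOD (n:ℤ)]) :
    Complex.exp (-2 * Real.pi * Complex.I * a / n) =
      Complex.exp (-2 * Real.pi * Complex.I * b / n) := by
  obtain ⟨t, ht⟩ := (Int.modEq_iff_dvd.mp h)
  have hn : (n:ℂ) ≠ 0 := Nat.cast_ne_zero.2 (NeZero.ne n)
  have hb : (a:ℂ) = b + n * (-t) := by
    have : (a:ℤ) = b + n * (-t) := by linarith [ht]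
    exact_mod_cast congrArg (Int.cast : ℤ → ℂ) this
  rw [hb, show -2 * (Real.pi:ℂ) * Complex.I * ((b:ℂ) + n * (-t)) / n =
      -2 * Real.pi * Complex.I * b / n + (t : ℂ) * (2 * Real.pi * Complex.I) by
    field_simp; ring]
  rw [Complex.exp_add, Complex.exp_int_mul_two_pi_mul_I, mul_one]

lemma dft_apply_int (n : ℕ) (j k : Fin n) :
    dft n j k = Complex.exp (-2 * Real.pi * Complex.I * ((j.1 * k.1 : ℤ) : ℂ) / n) / Real.sqrt n := by
  simp [dft]; ring_nf

lemma neg_val_modeq (n : ℕ) [NeZero n] (k : Fin n) :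
    (((-k : Fin n).1 : ℤ)) ≡ -(k.1 : ℤ) [ZMOD (n:ℤ)] := by
  have h : ((-k + k : Fin n)).1 = 0 := by rw [neg_add_cancel]; rfl
  rw [Fin.val_add] at h
  have hd : (n:ℤ) ∣ ((-k : Fin n).1 + k.1 : ℤ) := by
    exact_mod_cast (Nat.dvd_of_mod_eq_zero h)
  rw [Int.modEq_iff_dvd]
  have e : -(k.1:ℤ) - ((-k : Fin n).1 : ℤ) = -(((-k : Fin n).1 + k.1 : ℤ)) := by ring
  rw [e]
  exact hd.neg_right

lemma dft_conj (n : ℕ) [NeZero n] (j k : Fin n) :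
    (starRingEnd ℂ) (dft n j k) = dft n j (-k) := by
  have h1 : (starRingEnd ℂ) (dft n j k) =
      Complex.exp (-2 * Real.pi * Complex.I * ((-(j.1 * k.1 : ℤ) : ℤ) : ℂ) / n) / Real.sqrt n := by
    rw [dft_apply_int, map_div₀, ← Complex.exp_conj, Complex.conj_ofReal]
    congr 2
    push_cast
    simp only [map_div₀, _root_.map_mul, map_neg, Complex.conj_I, map_ofNat,
      Complex.conj_ofReal, Complex.conj_natCast, Complex.conj_natCast]
    ring
  rw [h1, dft_apply_int n j (-k)]
  congr 1
  refine exp_congr n ?_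
  have := (neg_val_modeq n k).mul_left (j.1 : ℤ)
  calc (-(j.1 * k.1 : ℤ)) = j.1 * (-(k.1:ℤ)) := by ring
    _ ≡ j.1 * ((-k : Fin n).1 : ℤ) [ZMOD (n:ℤ)] := this.symm

lemma dft2_conj (m n : ℕ) [NeZero m] [NeZero n] (p q : Fin m × Fin n) :
    (starRingEnd ℂ) (dft2 m n p q) = dft2 m n p (-q) := by
  simp only [dft2, Matrix.kroneckerMap_apply, _root_.map_mul, dft_conj, Prod.fst_neg,
    Prod.snd_neg]

/-- If `W` is a real `mn × mn` matrix, then the unitary-BCCB minimizer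
`C₀ = dft2 m n diag(c₀) (dft2 m n)ᴴ`, where `c₀` is the unit-modulus normalization of the diagonal of
`(dft2 m n)ᴴ W F`, is a real matrix. -/
theorem bccb_minimizer_of_real_is_real {m n : ℕ} [NeZero m] [NeZero n]
    (W : Matrix (Fin m × Fin n) (Fin m × Fin n) ℂ)
    (hW : ∀ p q, (W p q).im = 0)
    (y : Fin m × Fin n → ℂ)
    (hy : ∀ p, y p = ((dft2 m n)ᴴ * W * dft2 m n) p p)
    (c₀ : Fin m × Fin n → ℂ)
    (hc₀ : ∀ p, c₀ p = if y p = 0 then 1 else y p / ‖y p‖)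
    (C₀ : Matrix (Fin m × Fin n) (Fin m × Fin n) ℂ)
    (hC₀ : C₀ = dft2 m n * Matrix.diagonal c₀ * (dft2 m n)ᴴ) :
    ∀ p q, (C₀ p q).im = 0 := by
  -- conjugate symmetry of y
  have hyconj : ∀ p, (starRingEnd ℂ) (y p) = y (-p) := by
    intro p
    have hWr : ∀ a b, (starRingEnd ℂ) (W a b) = W a b := fun a b =>
      Complex.conj_eq_iff_im.mpr (hW a b)
    have h1 : y p = ∑ b, (∑ a, (starRingEnd ℂ) (dft2 m n a p) * W a b) * dft2 m n b p := by
      rw [hy]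
      simp [Matrix.mul_apply, Matrix.conjTranspose_apply]
    have h2 : y (-p) = ∑ b, (∑ a, (starRingEnd ℂ) (dft2 m n a (-p)) * W a b) * dft2 m n b (-p) := by
      rw [hy]
      simp [Matrix.mul_apply, Matrix.conjTranspose_apply]
    rw [h1, h2, map_sum]
    refine Finset.sum_congr rfl fun b _ => ?_
    rw [_root_.map_mul, map_sum]
    have hFb : dft2 m n b (-p) = (starRingEnd ℂ) (dft2 m n b p) := (dft2_conj m n b p).symm
    rw [hFb]
    congr 1
    refine Finset.sum_congr rfl fun a _ => ?_
    rw [_root_.map_mul, hWr, Complex.conj_conj, dft2_conj, neg_neg]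
  -- conjugate symmetry of c₀
  have hcconj : ∀ p, (starRingEnd ℂ) (c₀ p) = c₀ (-p) := by
    intro p
    have habs : ‖y (-p)‖ = ‖y p‖ := by
      rw [← hyconj, Complex.norm_conj]
    have hzero : y (-p) = 0 ↔ y p = 0 := by
      rw [← hyconj]; simp
    rw [hc₀ p, hc₀ (-p)]
    by_cases h : y p = 0
    · simp [h, hzero.mpr h]
    · rw [if_neg h, if_neg (fun h' => h (hzero.mp h'))]
      rw [map_div₀, hyconj, habs, Complex.conj_ofReal]
  -- entries of C₀
  have hC : ∀ p q, C₀ p q = ∑ k, dft2 m n p k * c₀ k * (starRingEnd ℂ) (dft2 m n q k) := by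
    intro p q
    rw [hC₀, Matrix.mul_apply]
    refine Finset.sum_congr rfl fun k _ => ?_
    rw [Matrix.mul_diagonal, Matrix.conjTranspose_apply]
    rfl
  intro p q
  rw [← Complex.conj_eq_iff_im, hC]
  rw [map_sum]
  calc (∑ k, (starRingEnd ℂ) (dft2 m n p k * c₀ k * (starRingEnd ℂ) (dft2 m n q k)))
      = ∑ k, dft2 m n p (-k) * c₀ (-k) * (starRingEnd ℂ) (dft2 m n q (-k)) := by
        refine Finset.sum_congr rfl fun k _ => ?_
        rw [_root_.map_mul, _root_.map_mul, dft2_conj, hcconj, Complex.conj_conj]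
        congr 1
        conv_lhs => rw [← Complex.conj_conj (dft2 m n q k)]
        rw [dft2_conj m n q k]
    _ = ∑ k, dft2 m n p k * c₀ k * (starRingEnd ℂ) (dft2 m n q k) :=
        Fintype.sum_equiv (Equiv.neg _) _ _ (fun k => by rw [Equiv.neg_apply])
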